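/- ∫_1^∞ (1/u + (1 − 1/u)² log(1 − 1/u)) du = 2(π²/6 − 1) = π²/3 − 2. -/

import Mathlib

open MeasureTheory Real Set Filter intervalIntegral
open scoped Topology

noncomputable def gg : ℝ → ℝ := fun t => -Real.log (1 - t) / t

noncomputable def LL : ℝ → ℝ := fun x => ∫ t in (0:ℝ)..x, gg t

lemma gg_meas : Measurable gg := by
  unfold gg
  exact ((Real.measurable_log.comp (measurable_const.sub measurable_id)).neg).div measurable_id

lemma gg_bound {t : ℝ} (ht : t ∈ Ioo (0:ℝ) 1) : gg t ≤ 4 * (1 - t) ^ (-(1/2) : ℝ) := by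
  obtain ⟨h0, h1⟩ := ht
  have hs : (0:ℝ) < 1 - t := by linarith
  have hlog : -Real.log (1 - t) ≤ 2 / Real.sqrt (1 - t) := by
    have h2 : Real.log (1 - t) = 2 * Real.log (Real.sqrt (1 - t)) := by
      rw [Real.log_sqrt hs.le]; ring
    have h3 : Real.log (Real.sqrt (1 - t))⁻¹ ≤ (Real.sqrt (1 - t))⁻¹ - 1 :=
      Real.log_le_sub_one_of_pos (by positivity)
    rw [Real.log_inv] at h3
    have : 0 < Real.sqrt (1 - t) := Real.sqrt_pos.2 hs
    rw [h2]
    rw [div_eq_mul_inv]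
    nlinarith
  have hsqpos : 0 < Real.sqrt (1 - t) := Real.sqrt_pos.2 hs
  have hsq1 : Real.sqrt (1 - t) ≤ 1 := by
    exact Real.sqrt_le_one.mpr (by linarith)
  have hinv1 : 1 ≤ (Real.sqrt (1 - t))⁻¹ := by
    rw [le_inv_comm₀ one_pos hsqpos]; simpa using hsq1
  have hrw : (1 - t) ^ (-(1/2) : ℝ) = (Real.sqrt (1 - t))⁻¹ := by
    rw [Real.rpow_neg hs.le, ← Real.sqrt_eq_rpow]
  rw [hrw]
  unfold gg
  rw [div_eq_mul_inv] at hlog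
  rcases le_or_gt t (1/2) with hc | hc
  · have h4 : Real.log (1 - t)⁻¹ ≤ (1 - t)⁻¹ - 1 := Real.log_le_sub_one_of_pos (by positivity)
    rw [Real.log_inv] at h4
    have h5 : (1 - t)⁻¹ ≤ 2 := by
      rw [inv_le_comm₀ hs (by norm_num)]; linarith
    have key : -Real.log (1 - t) / t ≤ 2 := by
      rw [div_le_iff₀ h0]
      nlinarith [mul_inv_cancel₀ hs.ne', mul_pos h0 hs]
    nlinarith
  · rw [div_le_iff₀ h0]
    nlinarith [mul_nonneg (by linarith : (0:ℝ) ≤ 4 * t - 2) (inv_pos.2 hsqpos).le]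

lemma gg_int : IntegrableOn gg (Icc 0 1) volume := by
  rw [integrableOn_Icc_iff_integrableOn_Ioo]
  have hmaj : IntegrableOn (fun t : ℝ => 4 * (1 - t) ^ (-(1/2) : ℝ)) (Ioo 0 1) volume := by
    have h := (intervalIntegral.intervalIntegrable_rpow' (a := 0) (b := 1)
      (r := -(1/2)) (by norm_num)).comp_sub_left 1
    simp only [sub_zero, sub_self] at h
    have h2 := (h.symm.const_mul 4).1
    rw [integrableOn_Ioc_iff_integrableOn_Ioo] at h2
    simpa using h2
  refine hmaj.mono' (gg_meas.aestronglyMeasurable.restrict) ?_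
  filter_upwards [ae_restrict_mem measurableSet_Ioo] with t ht
  rw [Real.norm_of_nonneg]
  · exact gg_bound ht
  · have hl : Real.log (1 - t) ≤ 0 := Real.log_nonpos (by linarith [ht.2]) (by linarith [ht.1])
    exact div_nonneg (neg_nonneg.2 hl) ht.1.le

lemma gg_intervalInt {x : ℝ} (h0 : 0 ≤ x) (h1 : x ≤ 1) :
    IntervalIntegrable gg volume 0 x := by
  rw [intervalIntegrable_iff_integrableOn_Ioc_of_le h0]
  exact gg_int.mono_set (fun t ht => ⟨ht.1.le, le_trans ht.2 h1⟩)

lemma LL_deriv {x : ℝ} (hx : x ∈ Ioo (0:ℝ) 1) : HasDerivAt LL (gg x) x := by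
  have hcont : ContinuousAt gg x := by
    have h1 : (1:ℝ) - x ≠ 0 := by have := hx.2; intro h; linarith [sub_eq_zero.mp h]
    exact (((Real.continuousAt_log h1).comp
      ((continuous_const.sub continuous_id).continuousAt)).neg).div continuousAt_id hx.1.ne'
  exact intervalIntegral.integral_hasDerivAt_right (gg_intervalInt hx.1.le hx.2.le)
    (gg_meas.stronglyMeasurable.stronglyMeasurableAtFilter) hcont

lemma LL_contOn : ContinuousOn LL (Icc 0 1) := by
  have := intervalIntegral.continuousOn_primitive_interval (a := 0) (b := 1) (μ := volume)
    (f := gg) (by simpa using gg_int)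
  simp only [Set.uIcc_of_le (by norm_num : (0:ℝ) ≤ 1)] at this; exact this

lemma hasSum_inv_sq : HasSum (fun n : ℕ => 1 / ((n : ℝ) + 1) ^ 2) (Real.pi ^ 2 / 6) := by
  have h := hasSum_zeta_two
  have h2 : HasSum (fun n : ℕ => (1:ℝ) / ((n + 1 : ℕ) : ℝ) ^ 2) (Real.pi ^ 2 / 6) := by
    rw [hasSum_nat_add_iff (f := fun n : ℕ => (1:ℝ) / (n : ℝ) ^ 2) 1]
    simpa using h
  convert h2 using 2 with n
  push_cast
  ring

lemma pow_int_Ioo (n : ℕ) : ∫ t in Ioo (0:ℝ) 1, t ^ n / ((n : ℝ) + 1) = 1 / ((n : ℝ) + 1) ^ 2 := by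
  rw [← integral_Ioc_eq_integral_Ioo, ← intervalIntegral.integral_of_le (by norm_num : (0:ℝ) ≤ 1)]
  rw [intervalIntegral.integral_div, integral_pow]
  field_simp
  ring

lemma LL_one : LL 1 = Real.pi ^ 2 / 6 := by
  have hle : (0:ℝ) ≤ 1 := by norm_num
  have key : ∫ t in Ioo (0:ℝ) 1, gg t = Real.pi ^ 2 / 6 := by
    have heq : ∀ t ∈ Ioo (0:ℝ) 1, gg t = ∑' n : ℕ, t ^ n / ((n : ℝ) + 1) := by
      intro t ht
      have habs : |t| < 1 := by rw [abs_lt]; constructor <;> [linarith [ht.1]; exact ht.2]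
      have hs := (hasSum_pow_div_log_of_abs_lt_one habs).div_const t
      have : (fun n : ℕ => t ^ (n + 1) / ((n : ℝ) + 1) / t) = fun n : ℕ => t ^ n / ((n : ℝ) + 1) := by
        funext n
        rw [pow_succ]
        field_simp [ht.1.ne']
      rw [this] at hs
      unfold gg
      rw [← hs.tsum_eq]
    rw [setIntegral_congr_fun measurableSet_Ioo heq]
    have hF_int : ∀ n : ℕ, Integrable (fun t : ℝ => t ^ n / ((n : ℝ) + 1))
        (volume.restrict (Ioo (0:ℝ) 1)) := by
      intro n
      exact (((continuous_pow n).div_const _).integrableOn_Icc.mono_set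
        Ioo_subset_Icc_self).integrable
    have hnorm : ∀ n : ℕ, (∫ t in Ioo (0:ℝ) 1, ‖t ^ n / ((n : ℝ) + 1)‖) = 1 / ((n : ℝ) + 1) ^ 2 := by
      intro n
      rw [setIntegral_congr_fun measurableSet_Ioo (g := fun t : ℝ => t ^ n / ((n : ℝ) + 1))]
      · exact pow_int_Ioo n
      · intro t ht
        exact Real.norm_of_nonneg (div_nonneg (pow_nonneg ht.1.le n) (by positivity))
    have hF_sum : Summable fun n : ℕ => ∫ t in Ioo (0:ℝ) 1, ‖t ^ n / ((n : ℝ) + 1)‖ := by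
      simp_rw [hnorm]
      exact hasSum_inv_sq.summable
    have := MeasureTheory.integral_tsum_of_summable_integral_norm hF_int hF_sum
    rw [← this]
    simp_rw [pow_int_Ioo]
    exact hasSum_inv_sq.tsum_eq
  unfold LL
  rw [intervalIntegral.integral_of_le hle, integral_Ioc_eq_integral_Ioo, key]

noncomputable def FF : ℝ → ℝ := fun u => (u - 1/u) * Real.log (1 - 1/u) + 1/u - 2 * LL (1/u)

lemma FF_deriv {u : ℝ} (hu : u ∈ Ioi (1:ℝ)) :
    HasDerivAt FF (1 / u + (1 - 1 / u) ^ 2 * Real.log (1 - 1 / u)) u := by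
  have hu1 : (1:ℝ) < u := hu
  have hu0 : u ≠ 0 := by linarith
  have hw : (0:ℝ) < 1 - 1/u := by
    rw [sub_pos, div_lt_one (by linarith)]; exact hu1
  have hw1 : 1 - 1/u < 1 := by
    have : (0:ℝ) < 1/u := by positivity
    linarith
  have hinv : HasDerivAt (fun x : ℝ => 1/x) (-(1/u^2)) u := by
    simpa [one_div] using (hasDerivAt_inv hu0)
  have hsub : HasDerivAt (fun x : ℝ => 1 - 1/x) (1/u^2) u := by
    have := (hasDerivAt_const u (1:ℝ)).sub hinv; simp only [zero_sub, neg_neg] at this; exact this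
  have hlog : HasDerivAt (fun x : ℝ => Real.log (1 - 1/x)) (1/u^2 / (1 - 1/u)) u := by
    exact hsub.log hw.ne'
  have hL : HasDerivAt (fun x : ℝ => LL (1/x)) (gg (1/u) * (-(1/u^2))) u :=
    (LL_deriv ⟨by positivity, by rw [div_lt_one (by linarith)]; exact hu1⟩).comp u hinv
  have h1 : HasDerivAt (fun x : ℝ => x - 1/x) (1 + 1/u^2) u := by
    have := (hasDerivAt_id' u).sub hinv; simp only [sub_neg_eq_add] at this; exact this
  have hF : HasDerivAt FF
      ((1 + 1/u^2) * Real.log (1 - 1/u) + (u - 1/u) * (1/u^2 / (1 - 1/u))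
        + (-(1/u^2)) - 2 * (gg (1/u) * (-(1/u^2)))) u := by
    exact ((h1.mul hlog).add hinv).sub (hL.const_mul 2)
  convert hF using 1
  unfold gg
  have hwne : (1:ℝ) - 1/u ≠ 0 := hw.ne'
  have hm1 : u - 1 ≠ 0 := by linarith
  have hm2 : -u^2 + u^3 ≠ 0 := by
    intro h
    apply hm1
    have : u^2 * (u - 1) = 0 := by linarith [h]
    rcases mul_eq_zero.mp this with h' | h'
    · exact absurd h' (pow_ne_zero 2 hu0)
    · exact h'
  field_simp
  ring

lemma cont_tendsto_right {f : ℝ → ℝ} {y a : ℝ} (h : ContinuousAt f a) (hy : f a = y) :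
    Tendsto f (𝓝[>] a) (𝓝 y) :=
  hy ▸ h.tendsto.mono_left nhdsWithin_le_nhds

lemma FF_one : FF 1 = 1 - Real.pi ^ 2 / 3 := by
  unfold FF
  rw [show (1:ℝ)/1 = 1 by norm_num, LL_one]
  norm_num
  ring

lemma FF_cont : ContinuousWithinAt FF (Ici 1) 1 := by
  rw [← continuousWithinAt_diff_self, Ici_sdiff_left]
  have hval : FF 1 = 1 - 2 * LL 1 := by unfold FF; norm_num
  rw [ContinuousWithinAt, hval]
  have hA : Tendsto (fun u : ℝ => (u - 1/u) * Real.log (1 - 1/u)) (𝓝[>] 1) (𝓝 0) := by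
    have heq : ∀ u ∈ Ioi (1:ℝ), (u - 1/u) * Real.log (1 - 1/u)
        = ((u+1)/u) * ((u-1) * Real.log (u-1)) - ((u+1)/u) * ((u-1) * Real.log u) := by
      intro u hu
      have hu1 : (1:ℝ) < u := hu
      have hu0 : u ≠ 0 := by linarith
      have : (1:ℝ) - 1/u = (u - 1)/u := by field_simp
      rw [this, Real.log_div (by linarith) hu0]
      field_simp
      ring
    rw [tendsto_congr' (eventually_nhdsWithin_of_forall heq)]
    have hx : Tendsto (fun u : ℝ => u - 1) (𝓝[>] 1) (𝓝[>] 0) := by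
      apply tendsto_nhdsWithin_of_tendsto_nhds_of_eventually_within
      · have h0 : Tendsto (fun u : ℝ => u - 1) (𝓝 (1:ℝ)) (𝓝 0) := by
          exact ((continuous_id (X := ℝ)).sub (continuous_const (y := (1:ℝ)))).tendsto' 1 0 (by norm_num)
        exact h0.mono_left nhdsWithin_le_nhds
      · filter_upwards [self_mem_nhdsWithin] with u (hu : 1 < u)
        simpa using hu
    have hxlog : Tendsto (fun u : ℝ => (u-1) * Real.log (u-1)) (𝓝[>] 1) (𝓝 0) := by
      have h := tendsto_log_mul_rpow_nhdsGT_zero one_pos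
      simp only [Real.rpow_one] at h
      have h2 := h.comp hx
      exact h2.congr (fun u => by simp only [Function.comp_apply]; ring)
    have hfrac : Tendsto (fun u : ℝ => (u+1)/u) (𝓝[>] (1:ℝ)) (𝓝 2) :=
      cont_tendsto_right ((continuousAt_id.add continuousAt_const).div continuousAt_id one_ne_zero)
        (by norm_num)
    have hulog : Tendsto (fun u : ℝ => (u-1) * Real.log u) (𝓝[>] (1:ℝ)) (𝓝 0) :=
      cont_tendsto_right ((continuousAt_id.sub continuousAt_const).mul
        (Real.continuousAt_log one_ne_zero)) (by norm_num)
    have hcomb := (hfrac.mul hxlog).sub (hfrac.mul hulog)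
    simpa using hcomb
  have hB : Tendsto (fun u : ℝ => 1/u) (𝓝[>] (1:ℝ)) (𝓝 1) :=
    cont_tendsto_right (continuousAt_const.div continuousAt_id one_ne_zero) (by norm_num)
  have hC : Tendsto (fun u : ℝ => LL (1/u)) (𝓝[>] 1) (𝓝 (LL 1)) := by
    have hL1 : ContinuousWithinAt LL (Icc 0 1) 1 := LL_contOn 1 (by norm_num)
    apply hL1.tendsto.comp
    apply tendsto_nhdsWithin_of_tendsto_nhds_of_eventually_within _ hB
    filter_upwards [self_mem_nhdsWithin] with u (hu : 1 < u)
    constructor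
    · positivity
    · rw [div_le_one (by linarith)]; linarith
  have hfin := (hA.add hB).sub ((hC.const_mul 2))
  have : FF = fun u : ℝ => (u - 1/u) * Real.log (1 - 1/u) + 1/u - 2 * LL (1/u) := rfl
  rw [this]
  convert hfin using 2
  norm_num

lemma FF_top : Tendsto FF atTop (𝓝 (-1)) := by
  have hinv : Tendsto (fun u : ℝ => 1/u) atTop (𝓝 0) := by
    simpa [one_div] using tendsto_inv_atTop_zero
  have hinv' : Tendsto (fun u : ℝ => 1/u) atTop (𝓝[>] 0) := by
    apply tendsto_nhdsWithin_of_tendsto_nhds_of_eventually_within _ hinv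
    filter_upwards [eventually_gt_atTop (0:ℝ)] with u hu
    have : (0:ℝ) < 1/u := by positivity
    exact this
  have hslope : Tendsto (fun t : ℝ => Real.log (1 - t) / t) (𝓝[≠] 0) (𝓝 (-1)) := by
    have hd : HasDerivAt (fun t : ℝ => Real.log (1 - t)) (-1) 0 := by
      have hsub : HasDerivAt (fun t : ℝ => 1 - t) (-1) (0:ℝ) := by
        have := (hasDerivAt_const (0:ℝ) (1:ℝ)).sub (hasDerivAt_id' (0:ℝ)); simp only [zero_sub] at this; exact this
      have := hsub.log (by norm_num : (1:ℝ) - 0 ≠ 0)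
      simp only [sub_zero, div_one] at this; exact this
    have := hasDerivAt_iff_tendsto_slope.mp hd
    apply this.congr'
    filter_upwards [self_mem_nhdsWithin] with t ht
    simp [slope_def_field, div_eq_mul_inv, mul_comm]
  have hA : Tendsto (fun u : ℝ => (u - 1/u) * Real.log (1 - 1/u)) atTop (𝓝 (-1)) := by
    have h1 : Tendsto (fun u : ℝ => (1 - (1/u)^2) * (Real.log (1 - 1/u) / (1/u)))
        atTop (𝓝 (1 * -1)) := by
      refine Tendsto.mul ?_ (hslope.comp (hinv'.mono_right (nhdsWithin_mono 0 (fun x hx => ne_of_gt hx))))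
      · have := (hinv.pow 2).const_sub 1
        simpa using this
    have h2 : ∀ᶠ u : ℝ in atTop, (1 - (1/u)^2) * (Real.log (1 - 1/u) / (1/u))
        = (u - 1/u) * Real.log (1 - 1/u) := by
      filter_upwards [eventually_gt_atTop (0:ℝ)] with u hu
      have hu0 : u ≠ 0 := hu.ne'
      field_simp
    have := h1.congr' h2
    simpa using this
  have hC : Tendsto (fun u : ℝ => LL (1/u)) atTop (𝓝 0) := by
    have hL0 : ContinuousWithinAt LL (Icc 0 1) 0 := LL_contOn 0 (by norm_num)
    have hLL0 : LL 0 = 0 := by unfold LL; simp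
    rw [← hLL0]
    apply hL0.tendsto.comp
    apply tendsto_nhdsWithin_of_tendsto_nhds_of_eventually_within _ hinv
    filter_upwards [eventually_ge_atTop (1:ℝ)] with u hu
    constructor
    · positivity
    · rw [div_le_one (by linarith)]; linarith
  have hfin := (hA.add hinv).sub (hC.const_mul 2)
  have : FF = fun u : ℝ => (u - 1/u) * Real.log (1 - 1/u) + 1/u - 2 * LL (1/u) := rfl
  rw [this]
  convert hfin using 2
  norm_num

lemma w_nonneg {w : ℝ} (hw0 : 0 < w) (hw1 : w < 1) : 0 ≤ (1 - w) + w^2 * Real.log w := by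
  have hlog : 1 - w⁻¹ ≤ Real.log w := by
    have := Real.log_le_sub_one_of_pos (inv_pos.2 hw0)
    rw [Real.log_inv] at this
    linarith
  have hmul : w^2 * (1 - w⁻¹) ≤ w^2 * Real.log w :=
    mul_le_mul_of_nonneg_left hlog (by positivity)
  have hid : w^2 * (1 - w⁻¹) = w^2 - w := by
    field_simp
  nlinarith [hmul, hid, sq_nonneg (1 - w)]

lemma f_nonneg {u : ℝ} (hu : u ∈ Ioi (1:ℝ)) :
    0 ≤ 1 / u + (1 - 1 / u) ^ 2 * Real.log (1 - 1 / u) := by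
  have hu1 : (1:ℝ) < u := hu
  have hw0 : 0 < 1 - 1/u := by
    rw [sub_pos, div_lt_one (by linarith)]; exact hu1
  have hw1 : 1 - 1/u < 1 := by
    have : (0:ℝ) < 1/u := by positivity
    linarith
  have h := w_nonneg hw0 hw1
  have h1u : 1/u = 1 - (1 - 1/u) := by ring
  linarith [h]

/-- `∫_1^∞ (1/u + (1 − 1/u)² log(1 − 1/u)) du = 2(π²/6 − 1) = π²/3 − 2`. -/
theorem integral_one_to_infty :
    ∫ u in Set.Ioi (1:ℝ), (1 / u + (1 - 1 / u) ^ 2 * Real.log (1 - 1 / u))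
      = Real.pi ^ 2 / 3 - 2 := by
  have := MeasureTheory.integral_Ioi_of_hasDerivAt_of_nonneg (g := FF)
    (g' := fun u => 1 / u + (1 - 1 / u) ^ 2 * Real.log (1 - 1 / u)) (a := 1) (l := -1)
    FF_cont (fun x hx => FF_deriv hx) (fun x hx => f_nonneg hx) FF_top
  rw [this, FF_one]
  ring
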